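/- Let U be a linear algebraic group with a closed embedding into some U_N. For any d > 0 and any rational U-module M: (1) M_{<d} = (M_{<d})_{<d}; (2) the inclusion functor ι_d from the category of k[U]_{<d}-comodules to the category of k[U]-comodules (rational U-modules), induced by the inclusion of coalgebras k[U]_{<d} ⊂ k[U], is left adjoint to the functor M ↦ M_{<d}. -/

import Mathlib

noncomputable section

open TensorProduct

variable (k : Type) [Field k]

/-- index set of strictly-upper-triangular matrix entries -/
abbrev UTIdx (N : ℕ) : Type := {ij : Fin N × Fin N // ij.1 < ij.2}

/-- `k[U_N]`, the polynomial algebra on the coordinate functions `x_{i,j}`, `i < j`. -/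
abbrev UNCoord (N : ℕ) : Type := MvPolynomial (UTIdx N) k

/-- the comultiplication of `k[U_N]`:
`Δ(x_{i,j}) = x_{i,j} ⊗ 1 + Σ_{i<t<j} x_{i,t} ⊗ x_{t,j} + 1 ⊗ x_{i,j}`. -/
def UNComul (N : ℕ) : UNCoord k N →ₐ[k] UNCoord k N ⊗[k] UNCoord k N :=
  MvPolynomial.aeval fun ij : UTIdx N =>
    (MvPolynomial.X ij ⊗ₜ[k] 1) + (1 ⊗ₜ[k] MvPolynomial.X ij) +
      ∑ t : Fin N,
        if h : ij.1.1 < t ∧ t < ij.1.2 then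
          MvPolynomial.X (⟨(ij.1.1, t), h.1⟩ : UTIdx N) ⊗ₜ[k]
            MvPolynomial.X (⟨(t, ij.1.2), h.2⟩ : UTIdx N)
        else 0

/-- the counit of `k[U_N]` (evaluation at the identity matrix). -/
def UNCounit (N : ℕ) : UNCoord k N →ₐ[k] k := MvPolynomial.aeval fun _ => 0

/-- `k[U_N]_{<d}`: polynomials of (total) degree `< d`. -/
def UNdegLT (N d : ℕ) : Submodule k (UNCoord k N) :=
  MvPolynomial.restrictTotalDegree (UTIdx N) k (d - 1)

variable {k}

/-- `(Δ, ε, ρ)`: `ρ : M → M ⊗ C` is a right comodule structure over the coalgebra `(C, Δ, ε)`. -/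
def IsComodule {C M : Type} [AddCommGroup C] [Module k C] [AddCommGroup M] [Module k M]
    (Δ : C →ₗ[k] C ⊗[k] C) (ε : C →ₗ[k] k) (ρ : M →ₗ[k] M ⊗[k] C) : Prop :=
  (∀ m, (TensorProduct.assoc k M C C) (LinearMap.rTensor C ρ (ρ m)) =
      LinearMap.lTensor M Δ (ρ m)) ∧
  (∀ m, (TensorProduct.rid k M) (LinearMap.lTensor M ε (ρ m)) = m)

/-- a map of right `C`-comodules -/
def IsComoduleMap {C M M' : Type} [AddCommGroup C] [Module k C]
    [AddCommGroup M] [Module k M] [AddCommGroup M'] [Module k M']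
    (ρ : M →ₗ[k] M ⊗[k] C) (ρ' : M' →ₗ[k] M' ⊗[k] C) (f : M →ₗ[k] M') : Prop :=
  ρ' ∘ₗ f = LinearMap.rTensor C f ∘ₗ ρ

/-- `M_B = { m : ρ(m) ∈ M ⊗ B }` for a subspace `B ⊆ C`. -/
def subFilt {C M : Type} [AddCommGroup C] [Module k C] [AddCommGroup M] [Module k M]
    (ρ : M →ₗ[k] M ⊗[k] C) (B : Submodule k C) : Submodule k M :=
  Submodule.comap ρ (LinearMap.range (LinearMap.lTensor M B.subtype))

/-- `L` is an injective object of the category of right `C`-comodules. -/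
def IsInjectiveComodule {C L : Type} [AddCommGroup C] [Module k C] [AddCommGroup L] [Module k L]
    (Δ : C →ₗ[k] C ⊗[k] C) (ε : C →ₗ[k] k) (ρL : L →ₗ[k] L ⊗[k] C) : Prop :=
  ∀ (M M' : Type) (_ : AddCommGroup M) (_ : Module k M) (_ : AddCommGroup M') (_ : Module k M')
    (ρM : M →ₗ[k] M ⊗[k] C) (ρM' : M' →ₗ[k] M' ⊗[k] C),
    IsComodule Δ ε ρM → IsComodule Δ ε ρM' →
    ∀ g : M' →ₗ[k] M, IsComoduleMap ρM' ρM g → Function.Injective g →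
    ∀ f : M' →ₗ[k] L, IsComoduleMap ρM' ρL f →
    ∃ h : M →ₗ[k] L, IsComoduleMap ρM ρL h ∧ h ∘ₗ g = f

/-- `L_B` is an injective object of the category of comodules over the sub-coalgebra `B ⊆ C`
(identified with the full subcategory of `C`-comodules whose coaction lands in `(-) ⊗ B`). -/
def IsInjectiveInSub {C L : Type} [AddCommGroup C] [Module k C] [AddCommGroup L] [Module k L]
    (Δ : C →ₗ[k] C ⊗[k] C) (ε : C →ₗ[k] k) (B : Submodule k C)
    (ρL : L →ₗ[k] L ⊗[k] C) : Prop :=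
  ∀ (M M' : Type) (_ : AddCommGroup M) (_ : Module k M) (_ : AddCommGroup M') (_ : Module k M')
    (ρM : M →ₗ[k] M ⊗[k] C) (ρM' : M' →ₗ[k] M' ⊗[k] C),
    IsComodule Δ ε ρM → IsComodule Δ ε ρM' →
    (∀ m, ρM m ∈ LinearMap.range (LinearMap.lTensor M B.subtype)) →
    (∀ m', ρM' m' ∈ LinearMap.range (LinearMap.lTensor M' B.subtype)) →
    ∀ g : M' →ₗ[k] M, IsComoduleMap ρM' ρM g → Function.Injective g →
    ∀ f : M' →ₗ[k] L, IsComoduleMap ρM' ρL f → (∀ m', f m' ∈ subFilt ρL B) →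
    ∃ h : M →ₗ[k] L, IsComoduleMap ρM ρL h ∧ (∀ m, h m ∈ subFilt ρL B) ∧ h ∘ₗ g = f

/-! ### Auxiliary lemmas -/

section Aux

open MvPolynomial LinearMap

variable (k) in
/-- span of `a ⊗ b` with both `a, b` of total degree `≤ n`. -/
private def PP (N n : ℕ) : Submodule k (UNCoord k N ⊗[k] UNCoord k N) :=
  LinearMap.range (TensorProduct.map
    (restrictTotalDegree (UTIdx N) k n).subtype
    (restrictTotalDegree (UTIdx N) k n).subtype)

private lemma tmul_mem_PP {N n : ℕ} {a b : UNCoord k N} (ha : a.totalDegree ≤ n)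
    (hb : b.totalDegree ≤ n) : a ⊗ₜ[k] b ∈ PP k N n :=
  ⟨(⟨a, (mem_restrictTotalDegree _ _ a).2 ha⟩ : restrictTotalDegree (UTIdx N) k n) ⊗ₜ
    (⟨b, (mem_restrictTotalDegree _ _ b).2 hb⟩ : restrictTotalDegree (UTIdx N) k n), rfl⟩

private lemma PP_eq_span (N n : ℕ) : PP k N n = Submodule.span k
    {t : UNCoord k N ⊗[k] UNCoord k N |
      ∃ a b : UNCoord k N, a.totalDegree ≤ n ∧ b.totalDegree ≤ n ∧ a ⊗ₜ[k] b = t} := by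
  rw [PP, TensorProduct.range_map_eq_span_tmul]
  congr 1
  ext t
  constructor
  · rintro ⟨a, b, rfl⟩
    exact ⟨a, b, (mem_restrictTotalDegree _ _ (a : UNCoord k N)).1 a.2,
      (mem_restrictTotalDegree _ _ (b : UNCoord k N)).1 b.2, rfl⟩
  · rintro ⟨a, b, ha, hb, rfl⟩
    exact ⟨⟨a, (mem_restrictTotalDegree _ _ a).2 ha⟩, ⟨b, (mem_restrictTotalDegree _ _ b).2 hb⟩, rfl⟩

private lemma PP_mono {N m n : ℕ} (h : m ≤ n) : PP k N m ≤ PP k N n := by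
  rw [PP_eq_span, PP_eq_span]
  apply Submodule.span_mono
  rintro t ⟨a, b, ha, hb, rfl⟩
  exact ⟨a, b, ha.trans h, hb.trans h, rfl⟩

private lemma one_mem_PP (N n : ℕ) : (1 : UNCoord k N ⊗[k] UNCoord k N) ∈ PP k N n := by
  rw [Algebra.TensorProduct.one_def]
  exact tmul_mem_PP (by simp) (by simp)

private lemma PP_mul {N m n : ℕ} {x y : UNCoord k N ⊗[k] UNCoord k N}
    (hx : x ∈ PP k N m) (hy : y ∈ PP k N n) : x * y ∈ PP k N (m + n) := by
  have hle : PP k N m * PP k N n ≤ PP k N (m + n) := by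
    rw [PP_eq_span, PP_eq_span, Submodule.span_mul_span]
    rw [PP_eq_span]
    apply Submodule.span_le.2
    rintro z hz
    rw [Set.mem_mul] at hz
    obtain ⟨u, hu, v, hv, rfl⟩ := hz
    obtain ⟨a, b, ha, hb, rfl⟩ := hu
    obtain ⟨a', b', ha', hb', rfl⟩ := hv
    apply Submodule.subset_span
    refine ⟨a * a', b * b', ?_, ?_, ?_⟩
    · exact (totalDegree_mul a a').trans (add_le_add ha ha')
    · exact (totalDegree_mul b b').trans (add_le_add hb hb')
    · rw [Algebra.TensorProduct.tmul_mul_tmul]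
  exact hle (Submodule.mul_mem_mul hx hy)

private lemma PP_pow {N : ℕ} {x : UNCoord k N ⊗[k] UNCoord k N}
    (hx : x ∈ PP k N 1) : ∀ e : ℕ, x ^ e ∈ PP k N e := by
  intro e
  induction e with
  | zero => simpa [pow_zero] using one_mem_PP N 0
  | succ e ih => rw [pow_succ]; exact PP_mul ih hx

private lemma comul_X_mem {N : ℕ} (ij : UTIdx N) :
    UNComul k N (MvPolynomial.X ij) ∈ PP k N 1 := by
  rw [UNComul, aeval_X]
  refine add_mem (add_mem ?_ ?_) (Submodule.sum_mem _ fun t _ => ?_)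
  · exact tmul_mem_PP (by simp [totalDegree_X]) (by simp)
  · exact tmul_mem_PP (by simp) (by simp [totalDegree_X])
  · by_cases h : ij.1.1 < t ∧ t < ij.1.2
    · rw [dif_pos h]
      exact tmul_mem_PP (by simp [totalDegree_X]) (by simp [totalDegree_X])
    · rw [dif_neg h]
      exact zero_mem _

private lemma finset_prod_mem_PP {N : ℕ} {ι : Type*} (t : Finset ι)
    (g : ι → UNCoord k N ⊗[k] UNCoord k N) (dg : ι → ℕ)
    (h : ∀ i ∈ t, g i ∈ PP k N (dg i)) :
    (∏ i ∈ t, g i) ∈ PP k N (∑ i ∈ t, dg i) := by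
  classical
  induction t using Finset.induction_on with
  | empty => simpa using one_mem_PP N 0
  | @insert a s hnot ih =>
    rw [Finset.prod_insert hnot, Finset.sum_insert hnot]
    exact PP_mul (h a (Finset.mem_insert_self a s))
      (ih fun i hi => h i (Finset.mem_insert_of_mem hi))

private lemma comul_monomial_mem {N : ℕ} (s : UTIdx N →₀ ℕ) (c : k) :
    UNComul k N (monomial s c) ∈ PP k N (s.sum fun _ e => e) := by
  rw [monomial_eq, map_mul]
  have h1 : UNComul k N (MvPolynomial.C c) = c • 1 := by
    rw [← MvPolynomial.algebraMap_eq, AlgHom.commutes, Algebra.algebraMap_eq_smul_one]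
  rw [h1, smul_mul_assoc, one_mul]
  refine Submodule.smul_mem _ _ ?_
  rw [Finsupp.prod, map_prod]
  have heq : (s.sum fun _ e => e) = ∑ i ∈ s.support, s i := rfl
  rw [heq]
  refine finset_prod_mem_PP s.support _ (fun i => s i) fun i _ => ?_
  rw [map_pow]
  exact PP_pow (comul_X_mem i) (s i)

private lemma comul_mem_PP {N n : ℕ} (f : UNCoord k N) (hf : f.totalDegree ≤ n) :
    UNComul k N f ∈ PP k N n := by
  have h : UNComul k N f =
      ∑ v ∈ f.support, UNComul k N (monomial v (coeff v f)) := by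
    rw [← map_sum]
    exact congrArg _ (f.as_sum)
  rw [h]
  refine Submodule.sum_mem _ fun v hv => ?_
  exact PP_mono ((le_totalDegree hv).trans hf) (comul_monomial_mem v (coeff v f))

/-- naturality of the associator -/
private lemma assoc_nat {M₁ M₂ M₃ N₁ N₂ N₃ : Type}
    [AddCommGroup M₁] [Module k M₁] [AddCommGroup M₂] [Module k M₂]
    [AddCommGroup M₃] [Module k M₃] [AddCommGroup N₁] [Module k N₁]
    [AddCommGroup N₂] [Module k N₂] [AddCommGroup N₃] [Module k N₃]
    (f : M₁ →ₗ[k] N₁) (g : M₂ →ₗ[k] N₂) (h : M₃ →ₗ[k] N₃) :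
    (TensorProduct.assoc k N₁ N₂ N₃).toLinearMap ∘ₗ
      TensorProduct.map (TensorProduct.map f g) h =
    TensorProduct.map f (TensorProduct.map g h) ∘ₗ
      (TensorProduct.assoc k M₁ M₂ M₃).toLinearMap := by
  apply TensorProduct.ext_threefold
  intro x y z
  simp

end Aux

theorem statement10 (p : ℕ) [Fact p.Prime] [CharP k p] [IsAlgClosed k] (N : ℕ)
    {A : Type} [CommRing A] [Algebra k A]
    (π : UNCoord k N →ₐ[k] A) (hπ : Function.Surjective π)
    (ΔA : A →ₐ[k] A ⊗[k] A) (εA : A →ₐ[k] k)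
    (hΔ : ∀ f, ΔA (π f) =
      TensorProduct.map π.toLinearMap π.toLinearMap (UNComul k N f))
    (hε : ∀ f, εA (π f) = UNCounit k N f)
    (d : ℕ) (hd : 0 < d)
    {M : Type} [AddCommGroup M] [Module k M]
    (ρ : M →ₗ[k] M ⊗[k] A)
    (hρ : IsComodule ΔA.toLinearMap εA.toLinearMap ρ) :
    -- (1) `M_{<d} = (M_{<d})_{<d}`: the coaction of the subcomodule `M_{<d}` again
    -- lands in `M_{<d} ⊗ k[U]_{<d}`
    (∀ m ∈ subFilt ρ (Submodule.map π.toLinearMap (UNdegLT k N d)),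
      ρ m ∈ LinearMap.range
        (TensorProduct.map
          (subFilt ρ (Submodule.map π.toLinearMap (UNdegLT k N d))).subtype
          (Submodule.map π.toLinearMap (UNdegLT k N d)).subtype)) ∧
    -- (2) the inclusion `ι_d` of `k[U]_{<d}`-comodules into rational `U`-modules is
    -- left adjoint to `(-)_{<d}`: every map of rational `U`-modules `f : M′ → M` from a
    -- `k[U]_{<d}`-comodule `M′` factors (necessarily uniquely) through `M_{<d} ⊆ M`.
    (∀ (M' : Type) (_ : AddCommGroup M') (_ : Module k M')
        (ρ' : M' →ₗ[k] M' ⊗[k] A),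
      IsComodule ΔA.toLinearMap εA.toLinearMap ρ' →
      (∀ m', ρ' m' ∈ LinearMap.range
        (LinearMap.lTensor M' (Submodule.map π.toLinearMap (UNdegLT k N d)).subtype)) →
      ∀ f : M' →ₗ[k] M, IsComoduleMap ρ' ρ f →
        ∀ m', f m' ∈ subFilt ρ (Submodule.map π.toLinearMap (UNdegLT k N d))) := by
  classical
  set B : Submodule k A := Submodule.map π.toLinearMap (UNdegLT k N d) with hB
  haveI hfreeB : Module.Free k ↥B := Module.Free.of_divisionRing k _
  haveI hflatB : Module.Flat k ↥B := Module.Flat.of_free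
  -- Δ preserves B
  have hΔB : ∀ b ∈ B, ΔA b ∈ LinearMap.range (TensorProduct.map B.subtype B.subtype) := by
    rintro _ ⟨f, hf, rfl⟩
    rw [show π.toLinearMap f = π f from rfl, hΔ]
    have hfdeg : f.totalDegree ≤ d - 1 :=
      (MvPolynomial.mem_restrictTotalDegree _ _ f).1 hf
    obtain ⟨x, hx⟩ := comul_mem_PP f hfdeg
    let F : Submodule k (UNCoord k N) :=
      MvPolynomial.restrictTotalDegree (UTIdx N) k (d - 1)
    -- the corestriction of π to a map F →ₗ B
    let q : F →ₗ[k] B := LinearMap.codRestrict B (π.toLinearMap ∘ₗ F.subtype)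
      (fun y => ⟨(y : UNCoord k N), y.2, rfl⟩)
    have hcomp : π.toLinearMap ∘ₗ F.subtype = B.subtype ∘ₗ q := by
      ext y; rfl
    have hfact : TensorProduct.map B.subtype B.subtype ∘ₗ TensorProduct.map q q =
        TensorProduct.map π.toLinearMap π.toLinearMap ∘ₗ
          TensorProduct.map F.subtype F.subtype := by
      rw [← TensorProduct.map_comp, ← TensorProduct.map_comp, hcomp]
    refine ⟨TensorProduct.map q q x, ?_⟩
    rw [← hx]
    exact LinearMap.congr_fun hfact x
  -- hence `(mkQ ⊗ 1) ∘ Δ` kills B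
  have hΔB0 : (LinearMap.rTensor A (B.mkQ) ∘ₗ ΔA.toLinearMap) ∘ₗ B.subtype = 0 := by
    ext b
    obtain ⟨x, hx⟩ := hΔB (b : A) b.2
    have h1 : TensorProduct.map B.subtype B.subtype =
        LinearMap.rTensor A B.subtype ∘ₗ LinearMap.lTensor B B.subtype :=
      (LinearMap.rTensor_comp_lTensor (f := B.subtype) (g := B.subtype)).symm
    have h2 : LinearMap.rTensor A B.mkQ ∘ₗ LinearMap.rTensor A B.subtype =
        LinearMap.rTensor A (B.mkQ ∘ₗ B.subtype) :=
      (LinearMap.rTensor_comp A B.mkQ B.subtype).symm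
    simp only [LinearMap.comp_apply, LinearMap.zero_apply]
    rw [show ΔA.toLinearMap (B.subtype b) = ΔA (b : A) from rfl, ← hx, h1,
      LinearMap.comp_apply, ← LinearMap.comp_apply (LinearMap.rTensor A B.mkQ), h2]
    have h3 : B.mkQ ∘ₗ B.subtype = 0 := by
      ext y; simp
    rw [h3]
    simp
  constructor
  · -- part (1)
    intro m hm
    set S : Submodule k M := subFilt ρ B with hS
    haveI hfreeM : Module.Free k M := Module.Free.of_divisionRing k _
    haveI hflatM : Module.Flat k M := Module.Flat.of_free
    obtain ⟨y, hy⟩ : ρ m ∈ LinearMap.range (LinearMap.lTensor M B.subtype) := hm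
    -- key : (((1_M ⊗ mkQ) ∘ ρ) ⊗ 1_A)(ρ m) = 0
    have key : LinearMap.rTensor A (LinearMap.lTensor M B.mkQ)
        (LinearMap.rTensor A ρ (ρ m)) = 0 := by
      -- transport through the associator
      have hnat := assoc_nat (LinearMap.id (M := M)) B.mkQ (LinearMap.id (M := A))
      have hco := hρ.1 m
      have hfact : (TensorProduct.assoc k M (A ⧸ B) A).toLinearMap ∘ₗ
          LinearMap.rTensor A (LinearMap.lTensor M B.mkQ) =
          LinearMap.lTensor M (LinearMap.rTensor A B.mkQ) ∘ₗ
            (TensorProduct.assoc k M A A).toLinearMap := by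
        simpa only [LinearMap.lTensor, LinearMap.rTensor] using hnat
      have hβinj : Function.Injective
          (TensorProduct.assoc k M (A ⧸ B) A).toLinearMap :=
        (TensorProduct.assoc k M (A ⧸ B) A).injective
      apply hβinj
      rw [map_zero, ← LinearMap.comp_apply, hfact, LinearMap.comp_apply]
      rw [show (TensorProduct.assoc k M A A).toLinearMap (LinearMap.rTensor A ρ (ρ m))
        = (TensorProduct.assoc k M A A) (LinearMap.rTensor A ρ (ρ m)) from rfl, hco]
      rw [← LinearMap.comp_apply, ← LinearMap.lTensor_comp, ← hy,
        ← LinearMap.comp_apply, ← LinearMap.lTensor_comp, hΔB0]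
      simp
    -- reduce to `y ∈ range (rTensor B S.subtype)`
    suffices hy' : y ∈ LinearMap.range (LinearMap.rTensor B S.subtype) by
      obtain ⟨z, hz⟩ := hy'
      refine ⟨z, ?_⟩
      rw [← (LinearMap.lTensor_comp_rTensor (f := S.subtype) (g := B.subtype) :
        _ = TensorProduct.map S.subtype B.subtype), LinearMap.comp_apply, hz, hy]
    -- exactness : range (rTensor S.subtype) = ker (rTensor S.mkQ)
    have hex : Function.Exact (LinearMap.rTensor B S.subtype)
        (LinearMap.rTensor B S.mkQ) :=
      Module.Flat.rTensor_exact (↥B) (LinearMap.exact_subtype_mkQ S)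
    suffices h0 : LinearMap.rTensor B S.mkQ y = 0 by
      obtain ⟨z, hz⟩ := (hex y).mp h0
      exact ⟨z, hz⟩
    -- S = ker (lTensor M B.mkQ ∘ ρ)
    have hexM : Function.Exact (LinearMap.lTensor M B.subtype)
        (LinearMap.lTensor M B.mkQ) :=
      Module.Flat.lTensor_exact M (LinearMap.exact_subtype_mkQ B)
    set g : M →ₗ[k] M ⊗[k] (A ⧸ B) := LinearMap.lTensor M B.mkQ ∘ₗ ρ with hg
    have hSg : S = LinearMap.ker g := by
      ext m'
      rw [hS, subFilt, Submodule.mem_comap, LinearMap.mem_ker, hg,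
        LinearMap.comp_apply, LinearMap.mem_range]
      constructor
      · rintro ⟨w, hw⟩; rw [← hw]; exact hexM.apply_apply_eq_zero w
      · intro h0
        obtain ⟨w, hw⟩ := (hexM (ρ m')).mp h0
        exact ⟨w, hw⟩
    -- ḡ : M/S ↪ M ⊗ (A/B)
    set gbar : (M ⧸ S) →ₗ[k] M ⊗[k] (A ⧸ B) := S.liftQ g (le_of_eq hSg) with hgbar
    have hgbar_inj : Function.Injective gbar := by
      rw [← LinearMap.ker_eq_bot]
      exact Submodule.ker_liftQ_eq_bot _ _ _ (le_of_eq hSg.symm)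
    have hrT_inj : Function.Injective (LinearMap.rTensor B gbar) :=
      Module.Flat.rTensor_preserves_injective_linearMap gbar hgbar_inj
    apply hrT_inj
    rw [map_zero, ← LinearMap.comp_apply, ← LinearMap.rTensor_comp,
      show gbar ∘ₗ S.mkQ = g from S.liftQ_mkQ g (le_of_eq hSg)]
    -- goal : rTensor B g y = 0
    have hsplit : LinearMap.rTensor B g =
        LinearMap.rTensor B (LinearMap.lTensor M B.mkQ) ∘ₗ LinearMap.rTensor B ρ := by
      rw [← LinearMap.rTensor_comp]
    rw [hsplit, LinearMap.comp_apply]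
    -- embed into (M ⊗ A/B) ⊗ A via subtype and use `key`
    have hιinj : Function.Injective
        (LinearMap.lTensor (M ⊗[k] (A ⧸ B)) B.subtype) :=
      Module.Flat.lTensor_preserves_injective_linearMap B.subtype B.injective_subtype
    apply hιinj
    rw [map_zero]
    calc LinearMap.lTensor (M ⊗[k] (A ⧸ B)) B.subtype
          ((LinearMap.rTensor B (LinearMap.lTensor M B.mkQ)) ((LinearMap.rTensor B ρ) y))
        = TensorProduct.map (LinearMap.lTensor M B.mkQ) B.subtype
            ((LinearMap.rTensor B ρ) y) :=
          LinearMap.congr_fun (LinearMap.lTensor_comp_rTensor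
            (f := LinearMap.lTensor M B.mkQ) (g := B.subtype)) _
      _ = LinearMap.rTensor A (LinearMap.lTensor M B.mkQ)
            (LinearMap.lTensor (M ⊗[k] A) B.subtype ((LinearMap.rTensor B ρ) y)) :=
          (LinearMap.congr_fun (LinearMap.rTensor_comp_lTensor
            (f := LinearMap.lTensor M B.mkQ) (g := B.subtype)) _).symm
      _ = LinearMap.rTensor A (LinearMap.lTensor M B.mkQ)
            (TensorProduct.map ρ B.subtype y) :=
          congrArg _ (LinearMap.congr_fun (LinearMap.lTensor_comp_rTensor
            (f := ρ) (g := B.subtype)) y)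
      _ = LinearMap.rTensor A (LinearMap.lTensor M B.mkQ)
            (LinearMap.rTensor A ρ (LinearMap.lTensor M B.subtype y)) :=
          congrArg _ ((LinearMap.congr_fun (LinearMap.rTensor_comp_lTensor
            (f := ρ) (g := B.subtype)) y).symm)
      _ = 0 := by rw [hy]; exact key
  · -- part (2)
    intro M' _ _ ρ' hρ' hland f hf m'
    obtain ⟨y, hy⟩ := hland m'
    show ρ (f m') ∈ LinearMap.range (LinearMap.lTensor M B.subtype)
    have h1 : ρ (f m') = LinearMap.rTensor A f (ρ' m') := LinearMap.congr_fun hf m'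
    refine ⟨LinearMap.rTensor B f y, ?_⟩
    calc LinearMap.lTensor M B.subtype (LinearMap.rTensor B f y)
        = TensorProduct.map f B.subtype y :=
          LinearMap.congr_fun (LinearMap.lTensor_comp_rTensor
            (f := f) (g := B.subtype)) y
      _ = LinearMap.rTensor A f (LinearMap.lTensor M' B.subtype y) :=
          (LinearMap.congr_fun (LinearMap.rTensor_comp_lTensor
            (f := f) (g := B.subtype)) y).symm
      _ = ρ (f m') := by rw [hy, ← h1]
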